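/- The set of all local derivations of π₂ is a Lie subalgebra of the Lie algebra of linear endomorphisms of π₂: it is a complex linear subspace, and for any two local derivations ∇ and Δ of π₂, the commutator [∇,Δ] = ∇∘Δ − Δ∘∇ is again a local derivation of π₂. -/

import Mathlib

noncomputable section

set_option maxHeartbeats 2000000

/-- The multiplication of the 5-dimensional naturally graded nilpotent associative
algebra `π₂`, given on the basis `e₁, …, e₅` (indices `0, …, 4`) by
`e₁e₁ = e₂`, `e₁e₂ = e₂e₁ = e₃`, `e₁e₄ = e₄e₁ = e₅`, `e₄e₄ = e₅`. -/
def pi2Mul (x y : Fin 5 → ℂ) : Fin 5 → ℂ :=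
  ![0, x 0 * y 0, x 0 * y 1 + x 1 * y 0, 0, x 0 * y 3 + x 3 * y 0 + x 3 * y 3]

/-- A derivation of `π₂`: a linear operator satisfying the Leibniz rule. -/
def IsPi2Der (D : (Fin 5 → ℂ) →ₗ[ℂ] (Fin 5 → ℂ)) : Prop :=
  ∀ x y, D (pi2Mul x y) = pi2Mul (D x) y + pi2Mul x (D y)

/-- A local derivation of `π₂`: a linear operator that agrees at every point with
some derivation (depending on the point). -/
def IsPi2LocDer (f : (Fin 5 → ℂ) →ₗ[ℂ] (Fin 5 → ℂ)) : Prop :=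
  ∀ x : Fin 5 → ℂ, ∃ D : (Fin 5 → ℂ) →ₗ[ℂ] (Fin 5 → ℂ), IsPi2Der D ∧ f x = D x

/- ### Auxiliary material -/

def E0 : Fin 5 → ℂ := ![1,0,0,0,0]
def E1 : Fin 5 → ℂ := ![0,1,0,0,0]
def E2 : Fin 5 → ℂ := ![0,0,1,0,0]
def E3 : Fin 5 → ℂ := ![0,0,0,1,0]
def E4 : Fin 5 → ℂ := ![0,0,0,0,1]

@[simp] lemma E0v0 : E0 (0 : Fin 5) = 1 := rfl
@[simp] lemma E0v1 : E0 (1 : Fin 5) = 0 := rfl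
@[simp] lemma E0v2 : E0 (2 : Fin 5) = 0 := rfl
@[simp] lemma E0v3 : E0 (3 : Fin 5) = 0 := rfl
@[simp] lemma E0v4 : E0 (4 : Fin 5) = 0 := rfl
@[simp] lemma E1v0 : E1 (0 : Fin 5) = 0 := rfl
@[simp] lemma E1v1 : E1 (1 : Fin 5) = 1 := rfl
@[simp] lemma E1v2 : E1 (2 : Fin 5) = 0 := rfl
@[simp] lemma E1v3 : E1 (3 : Fin 5) = 0 := rfl
@[simp] lemma E1v4 : E1 (4 : Fin 5) = 0 := rfl
@[simp] lemma E2v0 : E2 (0 : Fin 5) = 0 := rfl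
@[simp] lemma E2v1 : E2 (1 : Fin 5) = 0 := rfl
@[simp] lemma E2v2 : E2 (2 : Fin 5) = 1 := rfl
@[simp] lemma E2v3 : E2 (3 : Fin 5) = 0 := rfl
@[simp] lemma E2v4 : E2 (4 : Fin 5) = 0 := rfl
@[simp] lemma E3v0 : E3 (0 : Fin 5) = 0 := rfl
@[simp] lemma E3v1 : E3 (1 : Fin 5) = 0 := rfl
@[simp] lemma E3v2 : E3 (2 : Fin 5) = 0 := rfl
@[simp] lemma E3v3 : E3 (3 : Fin 5) = 1 := rfl
@[simp] lemma E3v4 : E3 (4 : Fin 5) = 0 := rfl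
@[simp] lemma E4v0 : E4 (0 : Fin 5) = 0 := rfl
@[simp] lemma E4v1 : E4 (1 : Fin 5) = 0 := rfl
@[simp] lemma E4v2 : E4 (2 : Fin 5) = 0 := rfl
@[simp] lemma E4v3 : E4 (3 : Fin 5) = 0 := rfl
@[simp] lemma E4v4 : E4 (4 : Fin 5) = 1 := rfl

/-- The generic derivation of `π₂`, as a plain function. -/
def pi2F (p q r s t u v : ℂ) (x : Fin 5 → ℂ) : Fin 5 → ℂ :=
  ![(v-t)/2 * x 0,
    q/2 * x 0 + (v-t) * x 1,
    p * x 0 + q * x 1 + 3*(v-t)/2 * x 2 + r * x 3,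
    t/2 * x 0 + v/2 * x 3,
    s * x 0 + t * x 1 + u * x 3 + v * x 4]

def pi2D (p q r s t u v : ℂ) : (Fin 5 → ℂ) →ₗ[ℂ] (Fin 5 → ℂ) where
  toFun := pi2F p q r s t u v
  map_add' x y := by
    funext i
    fin_cases i <;>
      simp only [pi2F, Fin.reduceFinMk, Fin.zero_eta, Fin.mk_one, Fin.isValue, Matrix.cons_val_zero,
        Matrix.cons_val_one, Matrix.head_cons, Matrix.cons_val_two, Matrix.tail_cons,
        Matrix.cons_val_three, Matrix.cons_val_four, Pi.add_apply] <;> ring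
  map_smul' c x := by
    funext i
    fin_cases i <;>
      simp only [pi2F, Fin.reduceFinMk, Fin.zero_eta, Fin.mk_one, Fin.isValue, Matrix.cons_val_zero,
        Matrix.cons_val_one, Matrix.head_cons, Matrix.cons_val_two, Matrix.tail_cons,
        Matrix.cons_val_three, Matrix.cons_val_four, Pi.smul_apply, smul_eq_mul,
        RingHom.id_apply] <;> ring

lemma pi2D_isDer (p q r s t u v : ℂ) : IsPi2Der (pi2D p q r s t u v) := by
  intro x y; funext i
  fin_cases i <;>
    simp only [pi2D, pi2F, pi2Mul, LinearMap.coe_mk, AddHom.coe_mk,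
      Fin.reduceFinMk, Fin.zero_eta, Fin.mk_one, Fin.isValue, Matrix.cons_val_zero,
      Matrix.cons_val_one, Matrix.head_cons, Matrix.cons_val_two, Matrix.tail_cons,
      Matrix.cons_val_three, Matrix.cons_val_four, Pi.add_apply] <;> ring

/-- The 14 linear conditions characterizing local derivations of `π₂`. -/
def Pi2Cond (f : (Fin 5 → ℂ) →ₗ[ℂ] (Fin 5 → ℂ)) : Prop :=
  f E0 0 = f E3 3 - f E0 3 ∧
  f E1 0 = 0 ∧ f E2 0 = 0 ∧ f E3 0 = 0 ∧ f E4 0 = 0 ∧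
  f E1 1 = f E4 4 - f E1 4 ∧
  f E2 1 = 0 ∧ f E3 1 = 0 ∧ f E4 1 = 0 ∧
  f E4 2 = 0 ∧
  f E1 3 = 0 ∧ f E2 3 = 0 ∧ f E4 3 = 0 ∧
  f E2 4 = 0

lemma basis_expand (x : Fin 5 → ℂ) :
    x = x 0 • E0 + x 1 • E1 + x 2 • E2 + x 3 • E3 + x 4 • E4 := by
  funext i
  fin_cases i <;>
    simp [E0, E1, E2, E3, E4, Fin.reduceFinMk, Fin.zero_eta, Fin.mk_one, Matrix.cons_val_zero,
      Matrix.cons_val_one, Matrix.head_cons, Matrix.cons_val_two, Matrix.tail_cons,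
      Matrix.cons_val_three, Matrix.cons_val_four]

lemma apply_eq (f : (Fin 5 → ℂ) →ₗ[ℂ] (Fin 5 → ℂ)) (x : Fin 5 → ℂ) (i : Fin 5) :
    f x i = x 0 * f E0 i + x 1 * f E1 i + x 2 * f E2 i + x 3 * f E3 i + x 4 * f E4 i := by
  conv_lhs => rw [basis_expand x]
  simp [map_add, map_smul]

/- products of basis vectors -/
lemma m00 : pi2Mul E0 E0 = E1 := by
  funext i; fin_cases i <;> simp [pi2Mul, E0, E1]
lemma m01 : pi2Mul E0 E1 = E2 := by
  funext i; fin_cases i <;> simp [pi2Mul, E0, E1, E2]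
lemma m31 : pi2Mul E3 E1 = 0 := by
  funext i; fin_cases i <;> simp [pi2Mul, E1, E3]
lemma m04 : pi2Mul E0 E4 = 0 := by
  funext i; fin_cases i <;> simp [pi2Mul, E0, E4]
lemma m33 : pi2Mul E3 E3 = E4 := by
  funext i; fin_cases i <;> simp [pi2Mul, E3, E4]
lemma m03 : pi2Mul E0 E3 = E4 := by
  funext i; fin_cases i <;> simp [pi2Mul, E0, E3, E4]

/-- Every derivation satisfies the 14 conditions. -/
lemma der_cond (D : (Fin 5 → ℂ) →ₗ[ℂ] (Fin 5 → ℂ)) (hD : IsPi2Der D) : Pi2Cond D := by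
  have h00 := hD E0 E0; rw [m00] at h00
  have h01 := hD E0 E1; rw [m01] at h01
  have h31 := hD E3 E1; rw [m31, map_zero] at h31
  have h04 := hD E0 E4; rw [m04, map_zero] at h04
  have h33 := hD E3 E3; rw [m33] at h33
  have h03 := hD E0 E3; rw [m03] at h03
  have c01 : D E1 0 = 0 := by
    have h := congrFun h00 0; simp [pi2Mul, Pi.add_apply, Pi.zero_apply] at h; linear_combination h
  have c31 : D E1 3 = 0 := by
    have h := congrFun h00 3; simp [pi2Mul, Pi.add_apply, Pi.zero_apply] at h; linear_combination h
  have e11 : D E1 1 = 2 * D E0 0 := by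
    have h := congrFun h00 1; simp [pi2Mul, Pi.add_apply, Pi.zero_apply] at h; linear_combination h
  have e14 : D E1 4 = 2 * D E0 3 := by
    have h := congrFun h00 4; simp [pi2Mul, Pi.add_apply, Pi.zero_apply] at h; linear_combination h
  have c02 : D E2 0 = 0 := by
    have h := congrFun h01 0; simp [pi2Mul, Pi.add_apply, Pi.zero_apply] at h; linear_combination h
  have c12 : D E2 1 = 0 := by
    have h := congrFun h01 1; simp [pi2Mul, Pi.add_apply, Pi.zero_apply] at h
    linear_combination h + c01
  have c32 : D E2 3 = 0 := by
    have h := congrFun h01 3; simp [pi2Mul, Pi.add_apply, Pi.zero_apply] at h; linear_combination h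
  have c42 : D E2 4 = 0 := by
    have h := congrFun h01 4; simp [pi2Mul, Pi.add_apply, Pi.zero_apply] at h
    linear_combination h + c31
  have c03 : D E3 0 = 0 := by
    have h := congrFun h31 2; simp [pi2Mul, Pi.add_apply, Pi.zero_apply] at h
    linear_combination -h
  have c04 : D E4 0 = 0 := by
    have h := congrFun h04 1; simp [pi2Mul, Pi.add_apply, Pi.zero_apply] at h
    linear_combination -h
  have c14 : D E4 1 = 0 := by
    have h := congrFun h04 2; simp [pi2Mul, Pi.add_apply, Pi.zero_apply] at h
    linear_combination -h
  have c34 : D E4 3 = 0 := by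
    have h := congrFun h04 4; simp [pi2Mul, Pi.add_apply, Pi.zero_apply] at h
    linear_combination -h
  have c24 : D E4 2 = 0 := by
    have h := congrFun h33 2; simp [pi2Mul, Pi.add_apply, Pi.zero_apply] at h; linear_combination h
  have e44 : D E4 4 = 2 * D E3 0 + 2 * D E3 3 := by
    have h := congrFun h33 4; simp [pi2Mul, Pi.add_apply, Pi.zero_apply] at h; linear_combination h
  have e44' : D E4 4 = D E0 0 + D E0 3 + D E3 3 := by
    have h := congrFun h03 4; simp [pi2Mul, Pi.add_apply, Pi.zero_apply] at h; linear_combination h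
  have c13 : D E3 1 = 0 := by
    have h := congrFun h03 2; simp [pi2Mul, Pi.add_apply, Pi.zero_apply] at h
    linear_combination c24 - h
  have c00 : D E0 0 = D E3 3 - D E0 3 := by
    linear_combination e44 - e44' + 2*c03
  have c11 : D E1 1 = D E4 4 - D E1 4 := by
    linear_combination e11 + e14 - e44 + 2*c00 - 2*c03
  exact ⟨c00, c01, c02, c03, c04, c11, c12, c13, c14, c24, c31, c32, c34, c42⟩

/-- Every local derivation satisfies the 14 conditions. -/
lemma locDer_cond (f : (Fin 5 → ℂ) →ₗ[ℂ] (Fin 5 → ℂ)) (hf : IsPi2LocDer f) : Pi2Cond f := by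
  obtain ⟨D1, hD1, he1⟩ := hf E1
  obtain ⟨D2, hD2, he2⟩ := hf E2
  obtain ⟨D3, hD3, he3⟩ := hf E3
  obtain ⟨D4, hD4, he4⟩ := hf E4
  obtain ⟨Da, hDa, hea⟩ := hf (E3 - E0)
  obtain ⟨Db, hDb, heb⟩ := hf (E1 - E4)
  obtain ⟨d1_00, d1_01, d1_02, d1_03, d1_04, d1_11, d1_12, d1_13, d1_14, d1_24, d1_31, d1_32, d1_34, d1_42⟩ := der_cond D1 hD1
  obtain ⟨d2_00, d2_01, d2_02, d2_03, d2_04, d2_11, d2_12, d2_13, d2_14, d2_24, d2_31, d2_32, d2_34, d2_42⟩ := der_cond D2 hD2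
  obtain ⟨d3_00, d3_01, d3_02, d3_03, d3_04, d3_11, d3_12, d3_13, d3_14, d3_24, d3_31, d3_32, d3_34, d3_42⟩ := der_cond D3 hD3
  obtain ⟨d4_00, d4_01, d4_02, d4_03, d4_04, d4_11, d4_12, d4_13, d4_14, d4_24, d4_31, d4_32, d4_34, d4_42⟩ := der_cond D4 hD4
  obtain ⟨da_00, da_01, da_02, da_03, da_04, da_11, da_12, da_13, da_14, da_24, da_31, da_32, da_34, da_42⟩ := der_cond Da hDa
  obtain ⟨db_00, db_01, db_02, db_03, db_04, db_11, db_12, db_13, db_14, db_24, db_31, db_32, db_34, db_42⟩ := der_cond Db hDb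
  have n01 : f E1 0 = 0 := by rw [congrFun he1 0]; exact d1_01
  have n31 : f E1 3 = 0 := by rw [congrFun he1 3]; exact d1_31
  have n02 : f E2 0 = 0 := by rw [congrFun he2 0]; exact d2_02
  have n12 : f E2 1 = 0 := by rw [congrFun he2 1]; exact d2_12
  have n32 : f E2 3 = 0 := by rw [congrFun he2 3]; exact d2_32
  have n42 : f E2 4 = 0 := by rw [congrFun he2 4]; exact d2_42
  have n03 : f E3 0 = 0 := by rw [congrFun he3 0]; exact d3_03
  have n13 : f E3 1 = 0 := by rw [congrFun he3 1]; exact d3_13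
  have n04 : f E4 0 = 0 := by rw [congrFun he4 0]; exact d4_04
  have n14 : f E4 1 = 0 := by rw [congrFun he4 1]; exact d4_14
  have n24 : f E4 2 = 0 := by rw [congrFun he4 2]; exact d4_24
  have n34 : f E4 3 = 0 := by rw [congrFun he4 3]; exact d4_34
  rw [map_sub, map_sub] at hea heb
  have hA := congrFun hea 0
  have hB := congrFun hea 3
  simp only [Pi.sub_apply] at hA hB
  have n00 : f E0 0 = f E3 3 - f E0 3 := by
    linear_combination (-1)*hA - hB + n03 - da_03 + da_00
  have hC := congrFun heb 1
  have hD' := congrFun heb 4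
  simp only [Pi.sub_apply] at hC hD'
  have n11 : f E1 1 = f E4 4 - f E1 4 := by
    linear_combination hC + hD' + n14 - db_14 + db_11
  exact ⟨n00, n01, n02, n03, n04, n11, n12, n13, n14, n24, n31, n32, n34, n42⟩

/-- Any map satisfying the 14 conditions is a local derivation. -/
lemma cond_locDer (f : (Fin 5 → ℂ) →ₗ[ℂ] (Fin 5 → ℂ)) (hc : Pi2Cond f) : IsPi2LocDer f := by
  obtain ⟨c00, c01, c02, c03, c04, c11, c12, c13, c14, c24, c31, c32, c34, c42⟩ := hc
  intro x
  by_cases hx0 : x 0 = 0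
  · by_cases hx3 : x 3 = 0
    · by_cases hx1 : x 1 = 0
      · by_cases hx2 : x 2 = 0
        · -- all of x0,x1,x2,x3 vanish
          refine ⟨pi2D 0 0 0 0 (f E4 4) 0 (f E4 4), pi2D_isDer _ _ _ _ _ _ _, ?_⟩
          funext i
          fin_cases i <;>
            (rw [apply_eq];
             simp only [pi2D, pi2F, LinearMap.coe_mk, AddHom.coe_mk, Fin.reduceFinMk, Fin.zero_eta, Fin.mk_one,
               Fin.isValue, Matrix.cons_val_zero, Matrix.cons_val_one, Matrix.head_cons,
               Matrix.cons_val_two, Matrix.tail_cons, Matrix.cons_val_three, Matrix.cons_val_four,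
               c00, c01, c02, c03, c04, c11, c12, c13, c14, c24, c31, c32, c34, c42,
               hx0, hx1, hx2, hx3] <;> ring)
        · -- x2 ≠ 0
          refine ⟨pi2D 0 0 0 0 ((3*(f E4 4) - 2*(f E2 2))/3) 0 (f E4 4),
            pi2D_isDer _ _ _ _ _ _ _, ?_⟩
          funext i
          fin_cases i <;>
            (rw [apply_eq];
             simp only [pi2D, pi2F, LinearMap.coe_mk, AddHom.coe_mk, Fin.reduceFinMk, Fin.zero_eta, Fin.mk_one,
               Fin.isValue, Matrix.cons_val_zero, Matrix.cons_val_one, Matrix.head_cons,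
               Matrix.cons_val_two, Matrix.tail_cons, Matrix.cons_val_three, Matrix.cons_val_four,
               c00, c01, c02, c03, c04, c11, c12, c13, c14, c24, c31, c32, c34, c42,
               hx0, hx1, hx3] <;> ring)
      · -- x1 ≠ 0, x0 = x3 = 0
        refine ⟨pi2D 0
            ((2*(f E1 2)*(x 1) + (2*(f E2 2) - 3*(f E4 4) + 3*(f E1 4)) * x 2) / (2 * x 1))
            0 0 (f E1 4) 0 (f E4 4), pi2D_isDer _ _ _ _ _ _ _, ?_⟩
        funext i
        fin_cases i <;>
          (rw [apply_eq];
           simp only [pi2D, pi2F, LinearMap.coe_mk, AddHom.coe_mk, Fin.reduceFinMk, Fin.zero_eta, Fin.mk_one,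
             Fin.isValue, Matrix.cons_val_zero, Matrix.cons_val_one, Matrix.head_cons,
             Matrix.cons_val_two, Matrix.tail_cons, Matrix.cons_val_three, Matrix.cons_val_four,
             c00, c01, c02, c03, c04, c11, c12, c13, c14, c24, c31, c32, c34, c42,
             hx0, hx3] <;> field_simp <;> ring)
    · -- x3 ≠ 0, x0 = 0
      refine ⟨pi2D 0 (f E1 2)
          ((2*(f E3 2)*(x 3) + (2*(f E2 2) - 3*(f E4 4) + 3*(f E1 4)) * x 2) / (2 * x 3))
          0
          (2*(f E3 3) - f E4 4 + f E1 4)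
          ((f E3 4 * x 3 + (f E4 4 - 2*(f E3 3)) * (x 1 + x 4)) / x 3)
          (2*(f E3 3)), pi2D_isDer _ _ _ _ _ _ _, ?_⟩
      funext i
      fin_cases i <;>
        (rw [apply_eq];
         simp only [pi2D, pi2F, LinearMap.coe_mk, AddHom.coe_mk, Fin.reduceFinMk, Fin.zero_eta, Fin.mk_one,
           Fin.isValue, Matrix.cons_val_zero, Matrix.cons_val_one, Matrix.head_cons,
           Matrix.cons_val_two, Matrix.tail_cons, Matrix.cons_val_three, Matrix.cons_val_four,
           c00, c01, c02, c03, c04, c11, c12, c13, c14, c24, c31, c32, c34, c42,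
           hx0] <;> field_simp <;> ring)
  · -- x0 ≠ 0
    refine ⟨pi2D
        ((f E0 2 * (x 0)^2 + (f E1 2 - 2*(f E0 1)) * x 1 * x 0
            - 2*(f E4 4 - f E1 4 - 2*(f E3 3) + 2*(f E0 3)) * (x 1)^2
            + (f E2 2 - 3*(f E3 3 - f E0 3)) * x 2 * x 0) / (x 0)^2)
        ((2*(f E0 1) * x 0 + 2*(f E4 4 - f E1 4 - 2*(f E3 3) + 2*(f E0 3)) * x 1) / x 0)
        (f E3 2)
        ((f E0 4 * x 0 + (f E1 4 - 2*(f E0 3)) * x 1 + (f E4 4 - 2*(f E3 3)) * x 4) / x 0)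
        (2*(f E0 3))
        (f E3 4)
        (2*(f E3 3)), pi2D_isDer _ _ _ _ _ _ _, ?_⟩
    funext i
    fin_cases i <;>
      (rw [apply_eq];
       simp only [pi2D, pi2F, LinearMap.coe_mk, AddHom.coe_mk, Fin.reduceFinMk, Fin.zero_eta, Fin.mk_one,
         Fin.isValue, Matrix.cons_val_zero, Matrix.cons_val_one, Matrix.head_cons,
         Matrix.cons_val_two, Matrix.tail_cons, Matrix.cons_val_three, Matrix.cons_val_four,
         c00, c01, c02, c03, c04, c11, c12, c13, c14, c24, c31, c32, c34, c42] <;>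
       field_simp <;> ring)

/-- The conditions are preserved by the commutator. -/
lemma bracket_cond (f g : (Fin 5 → ℂ) →ₗ[ℂ] (Fin 5 → ℂ))
    (hf : Pi2Cond f) (hg : Pi2Cond g) : Pi2Cond (f ∘ₗ g - g ∘ₗ f) := by
  obtain ⟨a00, a01, a02, a03, a04, a11, a12, a13, a14, a24, a31, a32, a34, a42⟩ := hf
  obtain ⟨b00, b01, b02, b03, b04, b11, b12, b13, b14, b24, b31, b32, b34, b42⟩ := hg
  have key : ∀ (j : Fin 5 → ℂ) (i : Fin 5), (f ∘ₗ g - g ∘ₗ f) j i =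
      (g j 0 * f E0 i + g j 1 * f E1 i + g j 2 * f E2 i + g j 3 * f E3 i + g j 4 * f E4 i)
      - (f j 0 * g E0 i + f j 1 * g E1 i + f j 2 * g E2 i + f j 3 * g E3 i + f j 4 * g E4 i) := by
    intro j i
    simp only [LinearMap.sub_apply, LinearMap.comp_apply, Pi.sub_apply]
    rw [apply_eq f (g j) i, apply_eq g (f j) i]
  refine ⟨?_, ?_, ?_, ?_, ?_, ?_, ?_, ?_, ?_, ?_, ?_, ?_, ?_, ?_⟩ <;>
    simp only [key] <;>
    simp only [a00, a01, a02, a03, a04, a11, a12, a13, a14, a24, a31, a32, a34, a42,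
      b00, b01, b02, b03, b04, b11, b12, b13, b14, b24, b31, b32, b34, b42] <;>
    ring

/-- The submodule of maps satisfying the conditions. -/
def pi2S : Submodule ℂ ((Fin 5 → ℂ) →ₗ[ℂ] (Fin 5 → ℂ)) where
  carrier := {f | Pi2Cond f}
  add_mem' := by
    rintro f g ⟨a00, a01, a02, a03, a04, a11, a12, a13, a14, a24, a31, a32, a34, a42⟩
      ⟨b00, b01, b02, b03, b04, b11, b12, b13, b14, b24, b31, b32, b34, b42⟩
    refine ⟨?_, ?_, ?_, ?_, ?_, ?_, ?_, ?_, ?_, ?_, ?_, ?_, ?_, ?_⟩ <;>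
      simp only [LinearMap.add_apply, Pi.add_apply, a00, a01, a02, a03, a04, a11, a12, a13,
        a14, a24, a31, a32, a34, a42, b00, b01, b02, b03, b04, b11, b12, b13, b14, b24,
        b31, b32, b34, b42] <;> ring
  zero_mem' := by
    refine ⟨?_, ?_, ?_, ?_, ?_, ?_, ?_, ?_, ?_, ?_, ?_, ?_, ?_, ?_⟩ <;>
      simp only [LinearMap.zero_apply, Pi.zero_apply] <;> ring
  smul_mem' := by
    rintro c f ⟨a00, a01, a02, a03, a04, a11, a12, a13, a14, a24, a31, a32, a34, a42⟩
    refine ⟨?_, ?_, ?_, ?_, ?_, ?_, ?_, ?_, ?_, ?_, ?_, ?_, ?_, ?_⟩ <;>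
      simp only [LinearMap.smul_apply, Pi.smul_apply, smul_eq_mul, a00, a01, a02, a03, a04,
        a11, a12, a13, a14, a24, a31, a32, a34, a42] <;> ring

/-- The local derivations of `π₂` form a complex linear subspace of the space of
linear endomorphisms of `π₂` which is closed under the commutator bracket, i.e.,
a Lie subalgebra of the Lie algebra of linear endomorphisms. -/
theorem pi2_locDer_lieAlgebra :
    (∃ S : Submodule ℂ ((Fin 5 → ℂ) →ₗ[ℂ] (Fin 5 → ℂ)),
        (S : Set ((Fin 5 → ℂ) →ₗ[ℂ] (Fin 5 → ℂ))) = {f | IsPi2LocDer f}) ∧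
    (∀ f g : (Fin 5 → ℂ) →ₗ[ℂ] (Fin 5 → ℂ), IsPi2LocDer f → IsPi2LocDer g →
        IsPi2LocDer (f ∘ₗ g - g ∘ₗ f)) := by
  constructor
  · refine ⟨pi2S, ?_⟩
    ext f
    exact ⟨fun h => cond_locDer f h, fun h => locDer_cond f h⟩
  · intro f g hf hg
    exact cond_locDer _ (bracket_cond f g (locDer_cond f hf) (locDer_cond g hg))
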